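/- For every real α > 1 and every real z with 0 < z ≤ 2/(α+1), one has (1+z)^α ≤ 1 + 2αz/(2 - (α-1)z); note that 2 - (α-1)z > 0 under these hypotheses. -/

import Mathlib

theorem power_ineq (α z : ℝ) (hα : 1 < α) (hz : 0 < z) (hz' : z ≤ 2 / (α + 1)) :
    0 < 2 - (α - 1) * z ∧ (1 + z) ^ α ≤ 1 + 2 * α * z / (2 - (α - 1) * z) := by
  have hα1 : (0:ℝ) < α + 1 := by linarith
  have hzt : (α + 1) * z ≤ 2 := by
    have := (le_div_iff₀ hα1).mp hz'
    linarith
  have hBz : 0 < 2 - (α - 1) * z := by nlinarith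
  refine ⟨hBz, ?_⟩
  set g : ℝ → ℝ := fun x =>
    Real.log (2 + (α + 1) * x) - Real.log (2 - (α - 1) * x) - α * Real.log (1 + x) with hg
  have hA : ∀ x ∈ Set.Icc (0:ℝ) z, 0 < 2 + (α + 1) * x := by
    intro x hx; nlinarith [hx.1]
  have hB : ∀ x ∈ Set.Icc (0:ℝ) z, 0 < 2 - (α - 1) * x := by
    intro x hx; nlinarith [hx.1, hx.2]
  have hC : ∀ x ∈ Set.Icc (0:ℝ) z, 0 < 1 + x := by
    intro x hx; nlinarith [hx.1]
  have hmono : StrictMonoOn g (Set.Icc 0 z) := by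
    apply strictMonoOn_of_deriv_pos (convex_Icc 0 z)
    · apply ContinuousOn.sub
      apply ContinuousOn.sub
      · exact ContinuousOn.log (by fun_prop) (fun x hx => (hA x hx).ne')
      · exact ContinuousOn.log (by fun_prop) (fun x hx => (hB x hx).ne')
      · exact ContinuousOn.const_smul
          (ContinuousOn.log (by fun_prop) (fun x hx => (hC x hx).ne')) α
    · intro x hx
      rw [interior_Icc] at hx
      have hxI : x ∈ Set.Icc (0:ℝ) z := ⟨hx.1.le, hx.2.le⟩
      have hAx := hA x hxI
      have hBx := hB x hxI
      have hCx := hC x hxI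
      have h1 : HasDerivAt (fun y : ℝ => 2 + (α + 1) * y) (α + 1) x := by
        simpa using ((hasDerivAt_id x).const_mul (α + 1)).const_add 2
      have h2 : HasDerivAt (fun y : ℝ => 2 - (α - 1) * y) (-(α - 1)) x := by
        simpa using ((hasDerivAt_id x).const_mul (α - 1)).const_sub 2
      have h3 : HasDerivAt (fun y : ℝ => 1 + y) 1 x := by
        simpa using (hasDerivAt_id x).const_add 1
      have hD : HasDerivAt g
          ((α + 1) / (2 + (α + 1) * x) - (-(α - 1)) / (2 - (α - 1) * x)
            - α * (1 / (1 + x))) x := by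
        exact ((h1.log hAx.ne').sub (h2.log hBx.ne')).sub ((h3.log hCx.ne').const_mul α)
      rw [hD.deriv]
      have key : (α + 1) / (2 + (α + 1) * x) - (-(α - 1)) / (2 - (α - 1) * x)
          - α * (1 / (1 + x))
          = α * (α ^ 2 - 1) * x ^ 2 / ((2 + (α + 1) * x) * ((2 - (α - 1) * x) * (1 + x))) := by
        field_simp [show (2:ℝ) - x * (α - 1) ≠ 0 by linarith]
        ring
      rw [key]
      have hα2 : 0 < α ^ 2 - 1 := by nlinarith
      have hx0 : 0 < x := hx.1
      positivity
  have hg0 : g 0 = 0 := by simp [hg]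
  have hgz : 0 < g z := by
    have := hmono (Set.left_mem_Icc.mpr hz.le) (Set.right_mem_Icc.mpr hz.le) hz
    rwa [hg0] at this
  have hAz : 0 < 2 + (α + 1) * z := hA z (Set.right_mem_Icc.mpr hz.le)
  have h1z : 0 < 1 + z := by linarith
  have hlog : α * Real.log (1 + z) ≤ Real.log ((2 + (α + 1) * z) / (2 - (α - 1) * z)) := by
    rw [Real.log_div hAz.ne' hBz.ne']
    simp only [hg] at hgz
    linarith
  have hrw : (1:ℝ) + 2 * α * z / (2 - (α - 1) * z)
      = (2 + (α + 1) * z) / (2 - (α - 1) * z) := by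
    field_simp [show (2:ℝ) - z * (α - 1) ≠ 0 by linarith]
    ring
  rw [hrw]
  calc (1 + z) ^ α = Real.exp (α * Real.log (1 + z)) := by
        rw [Real.rpow_def_of_pos h1z, mul_comm]
    _ ≤ Real.exp (Real.log ((2 + (α + 1) * z) / (2 - (α - 1) * z))) :=
        Real.exp_le_exp.mpr hlog
    _ = (2 + (α + 1) * z) / (2 - (α - 1) * z) :=
        Real.exp_log (div_pos hAz hBz)
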